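/- Let k > 1 and let s be the Yu-Gong sequence of period N = 4(2^{2k} − 1). Then S(2)·T* ≡ −2^{2k+1} (mod 2^{2^k+1} − 1). -/

import Mathlib

open Finset


private lemma sum_modEq {ι : Type*} (s : Finset ι) (f g : ι → ℤ) (n : ℤ)
    (h : ∀ i ∈ s, f i ≡ g i [ZMOD n]) : (∑ i ∈ s, f i) ≡ (∑ i ∈ s, g i) [ZMOD n] := by
  classical
  induction s using Finset.induction_on with
  | empty => simp [Int.ModEq.refl]
  | insert _ _ hx ih =>
    rw [Finset.sum_insert hx, Finset.sum_insert hx]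
    exact Int.ModEq.add (h _ (Finset.mem_insert_self _ _))
      (ih fun i hi => h i (Finset.mem_insert_of_mem hi))

private lemma pow_mod_aux (M : ℕ) (a : ℕ) :
    (2:ℤ)^a ≡ 2^(a % M) [ZMOD ((2:ℤ)^M - 1)] := by
  conv_lhs => rw [← Nat.div_add_mod a M]
  rw [pow_add, pow_mul]
  have h1 : ((2:ℤ)^M) ≡ 1 [ZMOD ((2:ℤ)^M - 1)] := by
    have : ((2:ℤ)^M - 1) ∣ ((2:ℤ)^M - 1) := dvd_rfl
    exact (Int.modEq_iff_dvd.mpr (by simpa using this)).symm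
  calc ((2:ℤ)^M)^(a/M) * 2^(a % M) ≡ 1^(a/M) * 2^(a % M) [ZMOD ((2:ℤ)^M - 1)] :=
        Int.ModEq.mul (h1.pow _) (Int.ModEq.refl _)
    _ = 2^(a % M) := by ring

private lemma pow_modEq_of_mod_eq (M : ℕ) (a b : ℕ) (h : a % M = b % M) :
    (2:ℤ)^a ≡ 2^b [ZMOD ((2:ℤ)^M - 1)] := by
  calc (2:ℤ)^a ≡ 2^(a % M) [ZMOD _] := pow_mod_aux M a
    _ = 2^(b % M) := by rw [h]
    _ ≡ 2^b [ZMOD _] := (pow_mod_aux M b).symm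

private lemma geom2 (n : ℕ) : (∑ u ∈ Finset.range n, (2:ℤ)^u) = 2^n - 1 := by
  induction n with
  | zero => simp
  | succ n ih => rw [Finset.sum_range_succ, ih]; ring



private lemma zmod2_cases : ∀ z : ZMod 2, z = 0 ∨ z = 1 := by decide

private lemma balance {F : Type} [Field F] [Fintype F] [DecidableEq F]
    (S : Finset F) (g : F → ZMod 2)
    (hg : ∀ x y : F, g (x + y) = g x + g y)
    (hS : ∀ x ∈ S, ∀ y ∈ S, x + y ∈ S)
    (hchar : ∀ x : F, x + x = 0) :
    (S.filter (fun x => g x = 1)).card = 0 ∨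
      2 * (S.filter (fun x => g x = 1)).card = S.card := by
  by_cases h0 : ∃ y₀ ∈ S, g y₀ = 1
  · right
    obtain ⟨y₀, hy₀S, hy₀⟩ := h0
    have key : (S.filter (fun x => g x = 0)).card = (S.filter (fun x => g x = 1)).card := by
      refine Finset.card_bij' (fun x _ => x + y₀) (fun x _ => x + y₀) ?_ ?_ ?_ ?_
      · intro a ha
        simp only [Finset.mem_filter] at ha ⊢
        refine ⟨hS a ha.1 y₀ hy₀S, ?_⟩
        rw [hg, ha.2, hy₀, zero_add]
      · intro a ha
        simp only [Finset.mem_filter] at ha ⊢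
        refine ⟨hS a ha.1 y₀ hy₀S, ?_⟩
        rw [hg, ha.2, hy₀]
        decide
      · intro a _; show a + y₀ + y₀ = a; rw [add_assoc, hchar, add_zero]
      · intro a _; show a + y₀ + y₀ = a; rw [add_assoc, hchar, add_zero]
    have hsplit : (S.filter (fun x => g x = 1)).card + (S.filter (fun x => ¬ g x = 1)).card
        = S.card := Finset.card_filter_add_card_filter_not _
    have hneg : S.filter (fun x => ¬ g x = 1) = S.filter (fun x => g x = 0) := by
      apply Finset.filter_congr
      intro x _
      rcases zmod2_cases (g x) with h | h <;> simp [h]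
    rw [hneg] at hsplit
    omega
  · left
    rw [Finset.card_eq_zero, Finset.filter_eq_empty_iff]
    intro x hx
    push_neg at h0
    exact h0 x hx

private lemma col_val (E : ℤ) (c : ZMod 2) :
    (∑ i ∈ Finset.range 4,
      (((if ((i:ℤ) + E) % 4 = 0 then (0 : ZMod 2) else 1) + c).val : ℤ))
      = 3 - 2 * (c.val : ℤ) := by
  rw [Finset.sum_range_succ, Finset.sum_range_succ, Finset.sum_range_succ,
    Finset.sum_range_succ, Finset.sum_range_zero]
  push_cast
  have h4 : E % 4 = 0 ∨ E % 4 = 1 ∨ E % 4 = 2 ∨ E % 4 = 3 := by omega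
  have k0 : (((0:ℤ) + E) % 4 = 0) ↔ E % 4 = 0 := by omega
  have k1 : (((1:ℤ) + E) % 4 = 0) ↔ E % 4 = 3 := by omega
  have k2 : (((2:ℤ) + E) % 4 = 0) ↔ E % 4 = 2 := by omega
  have k3 : (((3:ℤ) + E) % 4 = 0) ↔ E % 4 = 1 := by omega
  simp only [k0, k1, k2, k3]
  rcases h4 with h | h | h | h <;>
    rcases zmod2_cases c with rfl | rfl <;>
      simp [h] <;> decide

private lemma col_sign (E : ℤ) (c : ZMod 2) :
    (∑ i ∈ Finset.range 4,
      ((-1 : ℤ) ^ ((if ((i:ℤ) + E) % 4 = 0 then (0 : ZMod 2) else 1) + c).val))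
      = 4 * (c.val : ℤ) - 2 := by
  rw [Finset.sum_range_succ, Finset.sum_range_succ, Finset.sum_range_succ,
    Finset.sum_range_succ, Finset.sum_range_zero]
  push_cast
  have h4 : E % 4 = 0 ∨ E % 4 = 1 ∨ E % 4 = 2 ∨ E % 4 = 3 := by omega
  have k0 : (((0:ℤ) + E) % 4 = 0) ↔ E % 4 = 0 := by omega
  have k1 : (((1:ℤ) + E) % 4 = 0) ↔ E % 4 = 3 := by omega
  have k2 : (((2:ℤ) + E) % 4 = 0) ↔ E % 4 = 2 := by omega
  have k3 : (((3:ℤ) + E) % 4 = 0) ↔ E % 4 = 1 := by omega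
  simp only [k0, k1, k2, k3]
  rcases h4 with h | h | h | h <;>
    rcases zmod2_cases c with rfl | rfl <;>
      simp [h] <;> decide

private lemma trace_K_zero (k : ℕ) (hk : 0 < k)
    (F : Type) [Field F] [Fintype F] [Algebra (ZMod 2) F] [DecidableEq F]
    (hF : Fintype.card F = 2 ^ (2 * k))
    (hcard : (Finset.univ.filter (fun y : F => y ^ (2^k) = y)).card = 2 ^ k)
    (x : F) (hx : x ^ (2^k) = x) :
    Algebra.trace (ZMod 2) F x = 0 := by
  haveI : CharP F 2 := charP_of_injective_algebraMap (algebraMap (ZMod 2) F).injective 2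
  -- frobenius as an AlgEquiv over ZMod 2
  let σ₀ : F ≃ₐ[ZMod 2] F := AlgEquiv.ofRingEquiv (f := frobeniusEquiv F 2)
    (by intro a; rcases (by decide : ∀ z : ZMod 2, z = 0 ∨ z = 1) a with rfl | rfl <;> simp)
  have hσ₀ : ∀ y : F, σ₀ y = y ^ 2 := fun y => rfl
  have hpow : ∀ (n : ℕ) (y : F), (σ₀ ^ n) y = y ^ 2 ^ n := by
    intro n
    induction n with
    | zero => intro y; simp
    | succ n ih =>
      intro y
      rw [pow_succ, AlgEquiv.mul_apply, hσ₀, ih, ← pow_mul]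
      ring_nf
  set g : F ≃ₐ[ZMod 2] F := σ₀ ^ k with hg
  have hgapp : ∀ y : F, g y = y ^ 2 ^ k := hpow k
  have hg2 : g * g = 1 := by
    apply AlgEquiv.ext
    intro y
    rw [AlgEquiv.mul_apply, hgapp, hgapp, ← pow_mul]
    have h1 : (2:ℕ)^k * 2^k = 2^(2*k) := by rw [← pow_add]; ring_nf
    have h2 : y ^ 2 ^ (2 * k) = y := by
      rw [← hF]; exact FiniteField.pow_card y
    rw [h1, h2]
    rfl
  have hgne : g ≠ 1 := by
    intro h
    have : (Finset.univ.filter (fun y : F => y ^ (2^k) = y)) = Finset.univ := by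
      apply Finset.filter_true_of_mem
      intro y _
      have := hgapp y
      rw [h] at this
      simpa using this.symm
    rw [this, Finset.card_univ, hF] at hcard
    have h1 : 2 * k ≠ k := by omega
    exact h1 (Nat.pow_right_injective (le_refl 2) hcard)
  -- trace as sum over automorphisms
  have htr := trace_eq_sum_automorphisms (K := ZMod 2) x
  have hzero : (∑ σ : F ≃ₐ[ZMod 2] F, σ x) = 0 := by
    apply Finset.sum_involution (fun σ _ => σ * g)
    · intro σ _
      rw [AlgEquiv.mul_apply, hgapp, hx]
      exact CharTwo.add_self_eq_zero _
    · intro σ _ _ h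
      exact hgne (mul_left_cancel (a := σ) (by rw [h, mul_one]))
    · intro σ _; exact Finset.mem_univ _
    · intro σ _
      rw [mul_assoc, hg2, mul_one]
  rw [hzero] at htr
  have : algebraMap (ZMod 2) F (Algebra.trace (ZMod 2) F x) = algebraMap (ZMod 2) F 0 := by
    rw [htr, map_zero]
  exact (algebraMap (ZMod 2) F).injective this

private lemma fiber_eq (M w W u : ℕ) (hM : 0 < M) (hu : u < M) (hW : W = M * w) :
    (Finset.range W).filter (fun j => j % M = u)
      = (Finset.range w).image (fun l => u + M * l) := by
  ext j
  simp only [Finset.mem_filter, Finset.mem_range, Finset.mem_image]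
  constructor
  · rintro ⟨hjW, hmod⟩
    refine ⟨j / M, ?_, ?_⟩
    · by_contra hq
      push_neg at hq
      have h1 : M * w ≤ M * (j / M) := Nat.mul_le_mul_left M hq
      have h2 : M * (j / M) + j % M = j := Nat.div_add_mod j M
      rw [hW] at hjW
      omega
    · have h2 : M * (j / M) + j % M = j := Nat.div_add_mod j M
      omega
  · rintro ⟨l, hl, rfl⟩
    constructor
    · have h1 : M * (l + 1) ≤ M * w := Nat.mul_le_mul_left M hl
      rw [Nat.mul_succ] at h1
      omega
    · rw [Nat.add_mul_mod_self_left]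
      exact Nat.mod_eq_of_lt hu

private lemma fiber_card (M w W u : ℕ) (hM : 0 < M) (hu : u < M) (hW : W = M * w) :
    ((Finset.range W).filter (fun j => j % M = u)).card = w := by
  rw [fiber_eq M w W u hM hu hW, Finset.card_image_of_injective, Finset.card_range]
  intro l1 l2 h
  exact Nat.eq_of_mul_eq_mul_left hM (add_left_cancel h)

private lemma gen_lemma (W : ℕ) (hWpos : 0 < W)
    (F : Type) [Field F] [Fintype F] [DecidableEq F]
    (hF : Fintype.card F = W + 1)
    (α : F) (hα : orderOf α = W) :
    ∀ x : F, x ≠ 0 → ∃ j, j < W ∧ α ^ j = x := by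
  have hαne : α ≠ 0 := by
    intro h
    have h1 : α ^ W = 1 := by rw [← hα]; exact pow_orderOf_eq_one α
    rw [h, zero_pow (by omega)] at h1
    exact zero_ne_one h1
  have hsub : (Finset.range W).image (α ^ ·) ⊆ Finset.univ.erase 0 := by
    intro x hx
    simp only [Finset.mem_image, Finset.mem_range] at hx
    obtain ⟨j, _, rfl⟩ := hx
    exact Finset.mem_erase.mpr ⟨pow_ne_zero _ hαne, Finset.mem_univ _⟩
  have hcard : ((Finset.range W).image (α ^ ·)).card = W := by
    rw [Finset.card_image_of_injOn, Finset.card_range]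
    intro j1 h1 j2 h2 h
    exact pow_injOn_Iio_orderOf (by simpa [hα] using h1) (by simpa [hα] using h2) h
  have hcard2 : (Finset.univ.erase (0:F)).card = W := by
    rw [Finset.card_erase_of_mem (Finset.mem_univ _), Finset.card_univ, hF]
    omega
  have heq : (Finset.range W).image (α ^ ·) = Finset.univ.erase 0 :=
    Finset.eq_of_subset_of_card_le hsub (by omega)
  intro x hx
  have : x ∈ (Finset.range W).image (α ^ ·) := by
    rw [heq]
    exact Finset.mem_erase.mpr ⟨hx, Finset.mem_univ _⟩
  simp only [Finset.mem_image, Finset.mem_range] at this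
  obtain ⟨j, hj, hjx⟩ := this
  exact ⟨j, hj, hjx⟩


private lemma counts (k : ℕ) (hk : 1 < k)
    (F : Type) [Field F] [Fintype F] [Algebra (ZMod 2) F] [DecidableEq F]
    (hF : Fintype.card F = 2 ^ (2 * k))
    (α : F) (hα : orderOf α = 2 ^ (2 * k) - 1)
    (trace_K_zero : (Finset.univ.filter (fun y : F => y ^ (2^k) = y)).card = 2 ^ k →
      ∀ x : F, x ^ (2^k) = x → Algebra.trace (ZMod 2) F x = 0)
    (gen : ∀ x : F, x ≠ 0 → ∃ j, j < 2 ^ (2*k) - 1 ∧ α ^ j = x)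
    (fiber_eq : ∀ u, u < 2^k + 1 →
      (Finset.range (2^(2*k)-1)).filter (fun j => j % (2^k+1) = u)
        = (Finset.range (2^k-1)).image (fun l => u + (2^k+1) * l))
    (balance : ∀ (S : Finset F) (g : F → ZMod 2),
      (∀ x y : F, g (x + y) = g x + g y) →
      (∀ x ∈ S, ∀ y ∈ S, x + y ∈ S) →
      (S.filter (fun x => g x = 1)).card = 0 ∨
        2 * (S.filter (fun x => g x = 1)).card = S.card) :
    ∀ u, u < 2^k + 1 →
      (∑ j ∈ (Finset.range (2^(2*k)-1)).filter (fun j => j % (2^k+1) = u),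
          (Algebra.trace (ZMod 2) F (α ^ j)).val)
        = if u = 0 then 0 else 2^(k-1) := by
  haveI : CharP F 2 := charP_of_injective_algebraMap (algebraMap (ZMod 2) F).injective 2
  have h2k : 2 ≤ 2^k := by
    calc 2 = 2^1 := by norm_num
    _ ≤ 2^k := Nat.pow_le_pow_right (by norm_num) (by omega)
  obtain ⟨c, hc⟩ : ∃ c, 2^k = c + 1 := ⟨2^k - 1, by omega⟩
  set M := 2^k + 1 with hM
  set w := 2^k - 1 with hw
  set W := 2^(2*k) - 1 with hWdef
  set cN : ℕ → ℕ := fun u =>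
    ∑ j ∈ (Finset.range W).filter (fun j => j % M = u),
      (Algebra.trace (ZMod 2) F (α ^ j)).val with hcN
  have hMpos : 0 < M := by omega
  have hwpos : 0 < w := by rw [hw]; omega
  have hWmul : W = M * w := by
    have h1 : (2:ℕ)^(2*k) = 2^k * 2^k := by rw [← pow_add]; ring_nf
    have h2 : (2:ℕ)^k * 2^k = c*c + 2*c + 1 := by rw [hc]; ring
    have hwc : w = c := by rw [hw]; omega
    have hMc : M = c + 2 := by rw [hM]; omega
    have h3 : M * w = c*c + 2*c := by rw [hMc, hwc]; ring
    rw [hWdef, h3, h1, h2]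
    omega
  have h22k : 2 ≤ 2^(2*k) := by
    calc 2 = 2^1 := by norm_num
    _ ≤ 2^(2*k) := Nat.pow_le_pow_right (by norm_num) (by omega)
  have hWpos : 0 < W := by rw [hWdef]; omega
  have hαne : α ≠ 0 := by
    intro h
    have h1 : α ^ W = 1 := by rw [← hα]; exact pow_orderOf_eq_one α
    rw [h, zero_pow (by omega)] at h1
    exact zero_ne_one h1
  set β := α ^ M with hβ
  have hβorder : orderOf β = w := by
    rw [hβ, orderOf_pow' α (by omega), hα, hWmul]
    have hgcd : Nat.gcd (M * w) M = M := Nat.gcd_eq_right ⟨w, rfl⟩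
    rw [hgcd, Nat.mul_div_cancel_left _ hMpos]
  have hβw : β ^ w = 1 := by rw [← hβorder]; exact pow_orderOf_eq_one β
  have hβne : β ≠ 0 := pow_ne_zero _ hαne
  have hKx : ∀ l : ℕ, (β ^ l) ^ (2^k) = β ^ l := by
    intro l
    have hw1 : 2^k = w + 1 := by rw [hw]; omega
    rw [hw1, pow_succ, ← pow_mul, mul_comm l w, pow_mul, hβw, one_pow, one_mul]
  have hKiff : ∀ x : F, x ≠ 0 → x ^ (2^k) = x → ∃ l, l < w ∧ x = β ^ l := by
    intro x hx0 hxK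
    have hxw : x ^ w = 1 := by
      have hw1 : 2^k = w + 1 := by rw [hw]; omega
      rw [hw1, pow_succ] at hxK
      exact mul_right_cancel₀ hx0 (hxK.trans (one_mul x).symm)
    obtain ⟨j, hjW, rfl⟩ := gen x hx0
    have hdvd : W ∣ j * w := by
      rw [← hα]
      apply orderOf_dvd_of_pow_eq_one
      rw [pow_mul]
      exact hxw
    rw [hWmul] at hdvd
    have hdvd2 : M ∣ j := (Nat.mul_dvd_mul_iff_right hwpos).mp hdvd
    obtain ⟨l, rfl⟩ := hdvd2
    refine ⟨l, ?_, ?_⟩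
    · rw [hWmul] at hjW
      exact Nat.lt_of_mul_lt_mul_left hjW
    · rw [pow_mul]
  have hKcard : (Finset.univ.filter (fun x : F => x ^ (2^k) = x)).card = 2^k := by
    have hKset : Finset.univ.filter (fun x : F => x ^ (2^k) = x)
        = insert (0:F) ((Finset.range w).image (β ^ ·)) := by
      ext x
      simp only [Finset.mem_filter, Finset.mem_univ, true_and, Finset.mem_insert,
        Finset.mem_image, Finset.mem_range]
      constructor
      · intro hx
        by_cases hx0 : x = 0
        · exact Or.inl hx0
        · obtain ⟨l, hl, rfl⟩ := hKiff x hx0 hx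
          exact Or.inr ⟨l, hl, rfl⟩
      · rintro (rfl | ⟨l, _, rfl⟩)
        · exact zero_pow (by positivity)
        · exact hKx l
    rw [hKset, Finset.card_insert_of_notMem, Finset.card_image_of_injOn, Finset.card_range]
    · rw [hw]; omega
    · intro l1 h1 l2 h2 h
      exact pow_injOn_Iio_orderOf (by simpa [hβorder] using h1) (by simpa [hβorder] using h2) h
    · simp only [Finset.mem_image, Finset.mem_range, not_exists, not_and]
      intro l _
      exact pow_ne_zero _ hβne
  -- value at 0
  have hzero : cN 0 = 0 := by
    rw [hcN]
    apply Finset.sum_eq_zero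
    intro j hj
    simp only [Finset.mem_filter, Finset.mem_range] at hj
    obtain ⟨l, rfl⟩ := Nat.dvd_of_mod_eq_zero hj.2
    have h0 : Algebra.trace (ZMod 2) F (α ^ (M * l)) = 0 := by
      apply trace_K_zero hKcard
      rw [pow_mul]
      exact hKx l
    rw [h0, ZMod.val_zero]
  -- dichotomy for u ≠ 0
  have hdich : ∀ u, u < M → cN u = 0 ∨ 2 * cN u = 2^k := by
    intro u hu
    simp only [hcN]
    rw [fiber_eq u hu, Finset.sum_image (by
      intro l1 _ l2 _ h
      exact Nat.eq_of_mul_eq_mul_left hMpos (add_left_cancel h))]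
    have hterm : ∀ l : ℕ, α ^ (u + M * l) = α ^ u * β ^ l := by
      intro l
      rw [pow_add, pow_mul]
    have hcardT : (∑ l ∈ Finset.range w, (Algebra.trace (ZMod 2) F (α ^ (u + M * l))).val)
        = ((Finset.range w).filter
            (fun l => Algebra.trace (ZMod 2) F (α ^ u * β ^ l) = 1)).card := by
      rw [Finset.card_filter]
      apply Finset.sum_congr rfl
      intro l _
      rw [hterm l]
      rcases zmod2_cases (Algebra.trace (ZMod 2) F (α ^ u * β ^ l)) with h | h <;>
        rw [h] <;> decide
    rw [hcardT]
    have hbij : ((Finset.range w).filter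
          (fun l => Algebra.trace (ZMod 2) F (α ^ u * β ^ l) = 1)).card
        = ((Finset.univ.filter (fun x : F => x ^ (2^k) = x)).filter
            (fun y => Algebra.trace (ZMod 2) F (α ^ u * y) = 1)).card := by
      apply Finset.card_bij (fun l _ => β ^ l)
      · intro l hl
        simp only [Finset.mem_filter, Finset.mem_range, Finset.mem_univ, true_and] at hl ⊢
        exact ⟨hKx l, hl.2⟩
      · intro l1 h1 l2 h2 h
        simp only [Finset.mem_filter, Finset.mem_range] at h1 h2
        exact pow_injOn_Iio_orderOf (by simpa [hβorder] using h1.1)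
          (by simpa [hβorder] using h2.1) h
      · intro y hy
        simp only [Finset.mem_filter, Finset.mem_univ, true_and] at hy
        have hy0 : y ≠ 0 := by
          intro h
          rw [h, mul_zero, map_zero] at hy
          exact one_ne_zero hy.2.symm
        obtain ⟨l, hl, rfl⟩ := hKiff y hy0 hy.1
        refine ⟨l, ?_, rfl⟩
        simp only [Finset.mem_filter, Finset.mem_range]
        exact ⟨hl, hy.2⟩
    rw [hbij]
    have hbal := balance (Finset.univ.filter (fun x : F => x ^ (2^k) = x))
      (fun y => Algebra.trace (ZMod 2) F (α ^ u * y))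
      (by intro x y; rw [mul_add, map_add])
      (by
        intro x hx y hy
        simp only [Finset.mem_filter, Finset.mem_univ, true_and] at hx hy ⊢
        rw [add_pow_char_pow, hx, hy])
    have hbal' : ((Finset.univ.filter (fun x : F => x ^ (2^k) = x)).filter
          (fun y => Algebra.trace (ZMod 2) F (α ^ u * y) = 1)).card = 0 ∨
        2 * ((Finset.univ.filter (fun x : F => x ^ (2^k) = x)).filter
          (fun y => Algebra.trace (ZMod 2) F (α ^ u * y) = 1)).card
          = (Finset.univ.filter (fun x : F => x ^ (2^k) = x)).card := hbal
    rw [hKcard] at hbal'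
    exact hbal'
  -- total count
  have htot : (∑ u ∈ Finset.range M, cN u) = 2^(2*k-1) := by
    rw [hcN]
    rw [Finset.sum_fiberwise_of_maps_to (fun j _ => Finset.mem_range.mpr (Nat.mod_lt _ hMpos))]
    have hcard1 : (∑ j ∈ Finset.range W, (Algebra.trace (ZMod 2) F (α ^ j)).val)
        = ((Finset.range W).filter
            (fun j => Algebra.trace (ZMod 2) F (α ^ j) = 1)).card := by
      rw [Finset.card_filter]
      apply Finset.sum_congr rfl
      intro j _
      rcases zmod2_cases (Algebra.trace (ZMod 2) F (α ^ j)) with h | h <;> rw [h] <;> decide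
    rw [hcard1]
    have hbij2 : ((Finset.range W).filter
          (fun j => Algebra.trace (ZMod 2) F (α ^ j) = 1)).card
        = (Finset.univ.filter (fun x : F => Algebra.trace (ZMod 2) F x = 1)).card := by
      apply Finset.card_bij (fun j _ => α ^ j)
      · intro j hj
        simp only [Finset.mem_filter, Finset.mem_range, Finset.mem_univ, true_and] at hj ⊢
        exact hj.2
      · intro j1 h1 j2 h2 h
        simp only [Finset.mem_filter, Finset.mem_range] at h1 h2
        exact pow_injOn_Iio_orderOf (by simpa [hα, ← hWdef] using h1.1)
          (by simpa [hα, ← hWdef] using h2.1) h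
      · intro x hx
        simp only [Finset.mem_filter, Finset.mem_univ, true_and] at hx
        have hx0 : x ≠ 0 := by
          intro h
          rw [h, map_zero] at hx
          exact one_ne_zero hx.symm
        obtain ⟨j, hj, rfl⟩ := gen x hx0
        refine ⟨j, ?_, rfl⟩
        simp only [Finset.mem_filter, Finset.mem_range]
        exact ⟨hj, hx⟩
    rw [hbij2]
    have hbal := balance Finset.univ (fun y => Algebra.trace (ZMod 2) F y)
      (by intro x y; rw [map_add])
      (by intro x _ y _; exact Finset.mem_univ _)
    have hbal2 : (Finset.univ.filter (fun x : F => Algebra.trace (ZMod 2) F x = 1)).card = 0 ∨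
        2 * (Finset.univ.filter (fun x : F => Algebra.trace (ZMod 2) F x = 1)).card
          = (Finset.univ : Finset F).card := hbal
    rcases hbal2 with h | h
    · exfalso
      apply Algebra.trace_ne_zero (ZMod 2) F
      apply LinearMap.ext
      intro y
      simp only [LinearMap.zero_apply]
      rcases zmod2_cases (Algebra.trace (ZMod 2) F y) with hy | hy
      · exact hy
      · exfalso
        rw [Finset.card_eq_zero, Finset.filter_eq_empty_iff] at h
        exact (h (Finset.mem_univ y)) hy
    · rw [Finset.card_univ, hF] at h
      have h2 : (2:ℕ)^(2*k) = 2 * 2^(2*k-1) := by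
        conv_lhs => rw [show 2*k = (2*k-1)+1 by omega]
        rw [pow_succ]
        ring
      omega
  -- conclude
  have h2k1 : (2:ℕ)^k = 2 * 2^(k-1) := by
    conv_lhs => rw [show k = (k-1)+1 by omega]
    rw [pow_succ]
    ring
  have hdich' : ∀ u, u < M → cN u = 0 ∨ cN u = 2^(k-1) := by
    intro u hu
    rcases hdich u hu with h | h
    · exact Or.inl h
    · right; omega
  have hsplit : (∑ u ∈ Finset.range M, cN u) = cN 0 + ∑ u ∈ Finset.Ico 1 M, cN u := by
    rw [Finset.range_eq_Ico, Finset.sum_eq_sum_Ico_succ_bot hMpos]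
  have hIco : (∑ u ∈ Finset.Ico 1 M, cN u) = 2^k * 2^(k-1) := by
    have hpow : (2:ℕ)^(2*k-1) = 2^k * 2^(k-1) := by
      rw [← pow_add]
      congr 1
      omega
    omega
  have hcardIco : (Finset.Ico 1 M).card = 2^k := by
    rw [Nat.card_Ico]
    omega
  intro u hu
  by_cases hu0 : u = 0
  · subst hu0; rw [if_pos rfl]; exact hzero
  · rw [if_neg hu0]
    by_contra hne
    have hcu : cN u = 0 := by
      rcases hdich' u hu with h | h
      · exact h
      · exact absurd h hne
    have humem : u ∈ Finset.Ico 1 M := by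
      simp only [Finset.mem_Ico]
      omega
    have herase : (∑ v ∈ Finset.Ico 1 M, cN v)
        = cN u + ∑ v ∈ (Finset.Ico 1 M).erase u, cN v :=
      (Finset.add_sum_erase _ _ humem).symm
    have hbound : (∑ v ∈ (Finset.Ico 1 M).erase u, cN v)
        ≤ ((Finset.Ico 1 M).erase u).card * 2^(k-1) := by
      apply Finset.sum_le_card_nsmul
      intro v hv
      have hvM : v < M := by
        have := Finset.mem_of_mem_erase hv
        simp only [Finset.mem_Ico] at this
        omega
      rcases hdich' v hvM with h | h <;> omega
    have hec : ((Finset.Ico 1 M).erase u).card = 2^k - 1 := by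
      rw [Finset.card_erase_of_mem humem, hcardIco]
    rw [hec] at hbound
    have hlt : (2^k - 1) * 2^(k-1) < 2^k * 2^(k-1) := by
      have hp : 0 < (2:ℕ)^(k-1) := by positivity
      exact (Nat.mul_lt_mul_right hp).mpr (by omega)
    omega

private lemma reindex (W : ℕ) (hW : 0 < W) (f : ℕ → ℤ) :
    (∑ t ∈ Finset.range (4*W), f t)
      = ∑ i ∈ Finset.range 4, ∑ j ∈ Finset.range W, f (i*W + j) := by
  rw [← Finset.sum_product']
  refine Finset.sum_bij' (fun t _ => ((t / W, t % W) : ℕ × ℕ))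
    (fun p _ => p.1 * W + p.2) ?_ ?_ ?_ ?_ ?_
  · intro t ht
    simp only [Finset.mem_range] at ht
    simp only [Finset.mem_product, Finset.mem_range]
    constructor
    · exact Nat.div_lt_of_lt_mul (by omega)
    · exact Nat.mod_lt _ hW
  · intro p hp
    simp only [Finset.mem_product, Finset.mem_range] at hp
    simp only [Finset.mem_range]
    have h1 : p.1 * W + p.2 < p.1 * W + W := by omega
    have h2 : p.1 * W + W = (p.1 + 1) * W := by ring
    have h3 : (p.1 + 1) * W ≤ 4 * W := Nat.mul_le_mul_right _ (by omega)
    omega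
  · intro t _
    show t / W * W + t % W = t
    have h1 := Nat.div_add_mod t W
    have h2 : t / W * W = W * (t / W) := by ring
    omega
  · intro p hp
    simp only [Finset.mem_product, Finset.mem_range] at hp
    have h1 : (p.1 * W + p.2) / W = p.1 := by
      rw [Nat.add_comm, Nat.add_mul_div_right _ _ hW, Nat.div_eq_of_lt hp.2, Nat.zero_add]
    have h2 : (p.1 * W + p.2) % W = p.2 := by
      rw [Nat.add_comm, Nat.add_mul_mod_self_right, Nat.mod_eq_of_lt hp.2]
    show ((p.1 * W + p.2) / W, (p.1 * W + p.2) % W) = p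
    rw [h1, h2]
  · intro t _
    show f t = f (t / W * W + t % W)
    congr 1
    have h1 := Nat.div_add_mod t W
    have h2 : t / W * W = W * (t / W) := by ring
    omega

private lemma exp_congr (M W N i j : ℕ) (hMpos : 0 < M) (hMW : M ∣ W)
    (hN : N = 4 * W) (hi : i < 4) (hj : j < W) :
    ((N - (i*W + j)) % N) % M = ((M - j % M) % M) % M := by
  have hMN : M ∣ N := by rw [hN]; exact Dvd.dvd.mul_left hMW 4
  have ht : i*W + j ≤ N := by
    have h1 : i*W + j < i*W + W := by omega
    have h2 : i*W + W = (i+1)*W := by ring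
    have h3 : (i+1)*W ≤ 4*W := Nat.mul_le_mul_right _ (by omega)
    omega
  have hjM : j % M < M := Nat.mod_lt _ hMpos
  show Nat.ModEq M _ _
  have h1 : ((N - (i*W+j)) % N) ≡ N - (i*W+j) [MOD M] :=
    Nat.ModEq.of_dvd hMN (Nat.mod_modEq _ _)
  have h2 : ((M - j % M) % M) ≡ M - j % M [MOD M] := Nat.mod_modEq _ _
  refine h1.trans (Nat.ModEq.trans ?_ h2.symm)
  apply Nat.ModEq.add_right_cancel' ((i*W+j) + j % M)
  have e1 : N - (i*W+j) + ((i*W+j) + j % M) = N + j % M := by omega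
  have e2 : M - j % M + ((i*W+j) + j % M) = M + (i*W+j) := by omega
  rw [e1, e2]
  have hN0 : N ≡ 0 [MOD M] := Nat.modEq_zero_iff_dvd.mpr hMN
  have hM0 : M ≡ 0 [MOD M] := Nat.modEq_zero_iff_dvd.mpr dvd_rfl
  have ht0 : (i*W+j) ≡ j [MOD M] := by
    have hiW : i*W ≡ 0 [MOD M] := Nat.modEq_zero_iff_dvd.mpr (Dvd.dvd.mul_left hMW i)
    calc i*W + j ≡ 0 + j [MOD M] := hiW.add_right j
      _ = j := by omega
  have hjj : j ≡ j % M [MOD M] := (Nat.mod_modEq j M).symm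
  calc N + j % M ≡ 0 + j % M [MOD M] := hN0.add_right _
    _ = j % M := by omega
    _ ≡ j [MOD M] := hjj.symm
    _ ≡ i*W + j [MOD M] := ht0.symm
    _ = 0 + (i*W+j) := by omega
    _ ≡ M + (i*W+j) [MOD M] := (hM0.symm).add_right _

private lemma exp_congr_S (M W i j : ℕ) (hMW : M ∣ W) :
    (i*W + j) % M = (j % M) % M := by
  have h1 : (i*W) % M = 0 := Nat.modEq_zero_iff_dvd.mpr (Dvd.dvd.mul_left hMW i)
  conv_lhs => rw [Nat.add_mod, h1, Nat.zero_add]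

private lemma Wfact (k : ℕ) (hk : 0 < k) : (2^(2*k) - 1 : ℕ) = (2^k+1) * (2^k-1) := by
  have h2k : 2 ≤ 2^k := by
    calc 2 = 2^1 := by norm_num
    _ ≤ 2^k := Nat.pow_le_pow_right (by norm_num) (by omega)
  obtain ⟨c, hc⟩ : ∃ c, 2^k = c + 1 := ⟨2^k - 1, by omega⟩
  have h1 : (2:ℕ)^(2*k) = 2^k * 2^k := by rw [← pow_add]; ring_nf
  have h2 : (2:ℕ)^k * 2^k = c*c + 2*c + 1 := by rw [hc]; ring
  have h3 : (2^k+1) * (2^k-1) = c*c + 2*c := by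
    have hww : (2:ℕ)^k - 1 = c := by omega
    rw [hww, hc]
    ring
  omega
theorem stmt15
    (k : ℕ) (hk : 1 < k)
    (δ : ℤ) (hδ : δ = 1 ∨ δ = -1)
    (W N : ℕ) (hW : W = 2 ^ (2 * k) - 1) (hN : N = 4 * W)
    (F : Type) [Field F] [Fintype F] [Algebra (ZMod 2) F]
    (hF : Fintype.card F = 2 ^ (2 * k))
    (α : F) (hα : orderOf α = 2 ^ (2 * k) - 1)
    (b : ℕ → ZMod 2) (hb : ∀ j, b j = Algebra.trace (ZMod 2) F (α ^ j))
    (e : ℕ → ℤ)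
    (he : ∀ i r : ℕ, i ≤ 2 ^ k - 2 → r ≤ 2 ^ k →
      e ((2 ^ k + 1) * i + r) =
        if r = 0 then (3 * (i : ℤ) + δ) % 4 else (3 * ((i : ℤ) + (r : ℤ))) % 4)
    (s : ℕ → ZMod 2)
    (hs : ∀ i j : ℕ, i ≤ 3 → j ≤ W - 1 →
      s (i * W + j) = (if ((i : ℤ) + e j) % 4 = 0 then 0 else 1) + b j)
    (S2 T2 : ℤ)
    (hS2 : S2 = ∑ t ∈ Finset.range N, ((s t).val : ℤ) * 2 ^ t)
    (hT2 : T2 = ∑ t ∈ Finset.range N, (-1 : ℤ) ^ (s t).val * 2 ^ ((N - t) % N))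
    :
    Int.ModEq (2 ^ (2 ^ k + 1) - 1) (S2 * T2) (-(2 ^ (2 * k + 1))) := by
  classical
  clear he hδ
  have hk0 : 0 < k := by omega
  have h2k : 2 ≤ 2^k := by
    calc 2 = 2^1 := by norm_num
    _ ≤ 2^k := Nat.pow_le_pow_right (by norm_num) (by omega)
  have h22k : 2 ≤ 2^(2*k) := by
    calc 2 = 2^1 := by norm_num
    _ ≤ 2^(2*k) := Nat.pow_le_pow_right (by norm_num) (by omega)
  haveI : CharP F 2 := charP_of_injective_algebraMap (algebraMap (ZMod 2) F).injective 2
  -- instantiate the counting lemma before introducing local abbreviations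
  have hWfact : (2^(2*k) - 1 : ℕ) = (2^k+1) * (2^k-1) := Wfact k hk0
  have hgen : ∀ x : F, x ≠ 0 → ∃ j, j < 2 ^ (2*k) - 1 ∧ α ^ j = x := by
    apply gen_lemma (2^(2*k) - 1) (by omega) F (by omega) α hα
  have hcnt := counts k hk F hF α hα
    (fun hcard x hx => trace_K_zero k hk0 F hF hcard x hx)
    hgen
    (fun u hu => fiber_eq (2^k+1) (2^k-1) (2^(2*k)-1) u (by omega) hu hWfact)
    (fun S g hg hS => balance S g hg hS (fun x => CharTwo.add_self_eq_zero x))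
  rw [← hW] at hcnt
  have hfib : ∀ u, u < 2^k+1 →
      (Finset.range W).filter (fun j => j % (2^k+1) = u)
        = (Finset.range (2^k-1)).image (fun l => u + (2^k+1) * l) :=
    fun u hu => fiber_eq (2^k+1) (2^k-1) W u (by omega) hu (by omega)
  have hfibcard : ∀ u, u < 2^k+1 →
      ((Finset.range W).filter (fun j => j % (2^k+1) = u)).card = 2^k-1 :=
    fun u hu => fiber_card (2^k+1) (2^k-1) W u (by omega) hu (by omega)
  -- local abbreviations
  set M := 2^k + 1 with hM
  set w := 2^k - 1 with hw
  have hMpos : 0 < M := by omega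
  have hwpos : 0 < w := by rw [hw]; omega
  have hWpos : 0 < W := by rw [hW]; omega
  have hMW : M ∣ W := ⟨w, by omega⟩
  set m : ℤ := 2^M - 1 with hm
  have hpow2 : ∀ a c : ℕ, a % M = c % M → (2:ℤ)^a ≡ 2^c [ZMOD m] := by
    intro a c h
    rw [hm]
    exact pow_modEq_of_mod_eq M a c h
  -- column sums
  have hs' : ∀ i j : ℕ, i < 4 → j < W →
      s (i*W+j) = (if ((i:ℤ) + e j) % 4 = 0 then 0 else 1) + b j :=
    fun i j hi hj => hs i j (by omega) (by omega)
  have hcolv : ∀ j, j < W →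
      (∑ i ∈ Finset.range 4, ((s (i*W+j)).val : ℤ)) = 3 - 2 * ((b j).val : ℤ) := by
    intro j hj
    rw [Finset.sum_congr rfl (fun i hi => by
      rw [hs' i j (Finset.mem_range.mp hi) hj])]
    exact col_val (e j) (b j)
  have hcols : ∀ j, j < W →
      (∑ i ∈ Finset.range 4, (-1:ℤ) ^ (s (i*W+j)).val) = 4 * ((b j).val : ℤ) - 2 := by
    intro j hj
    rw [Finset.sum_congr rfl (fun i hi => by
      rw [hs' i j (Finset.mem_range.mp hi) hj])]
    exact col_sign (e j) (b j)
  -- counting sums rewritten with b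
  have hcntb : ∀ u, u < M →
      (∑ j ∈ (Finset.range W).filter (fun j => j % M = u), ((b j).val : ℤ))
        = if u = 0 then 0 else (2:ℤ)^(k-1) := by
    intro u hu
    have h1 : (∑ j ∈ (Finset.range W).filter (fun j => j % M = u), (b j).val)
        = ∑ j ∈ (Finset.range W).filter (fun j => j % M = u),
            (Algebra.trace (ZMod 2) F (α ^ j)).val :=
      Finset.sum_congr rfl (fun j _ => by rw [hb])
    have h2 := hcnt u hu
    rw [← Nat.cast_sum, h1, h2]
    split_ifs
    · norm_num
    · push_cast
      rfl
  -- geometric evaluations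
  have hsum1 : (∑ u ∈ Finset.range M, (2:ℤ)^u) = 2^M - 1 := geom2 M
  have hsum2 : (∑ u ∈ Finset.range M, (2:ℤ)^((M-u) % M)) = 2^M - 1 := by
    rw [hM, Finset.sum_range_succ' _ (2^k)]
    have hz : ((2^k+1 - 0) % (2^k+1)) = 0 := by
      rw [Nat.sub_zero, Nat.mod_self]
    rw [hz, pow_zero]
    have hc : ∀ i ∈ Finset.range (2^k),
        (2:ℤ)^((2^k+1 - (i+1)) % (2^k+1)) = (fun i => (2:ℤ)^(i+1)) (2^k - 1 - i) := by
      intro i hi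
      simp only [Finset.mem_range] at hi
      have e1 : (2^k+1 - (i+1)) % (2^k+1) = 2^k - i := by
        rw [Nat.mod_eq_of_lt (by omega)]
        omega
      have e2 : 2^k - 1 - i + 1 = 2^k - i := by omega
      rw [e1]
      simp only []
      rw [e2]
    rw [Finset.sum_congr rfl hc, Finset.sum_range_reflect (fun i => (2:ℤ)^(i+1)) (2^k)]
    have hexp : (∑ i ∈ Finset.range (2^k), (2:ℤ)^(i+1)) = 2^(2^k+1) - 2 := by
      have : ∀ i, (2:ℤ)^(i+1) = 2^i * 2 := fun i => by rw [pow_succ]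
      rw [Finset.sum_congr rfl (fun i _ => this i), ← Finset.sum_mul, geom2]
      have h2M : (2:ℤ)^(2^k+1) = 2^(2^k) * 2 := by rw [pow_succ]
      rw [h2M]
      ring
    rw [hexp]
    ring
  -- weighted sums
  have hBv : (∑ j ∈ Finset.range W, ((b j).val:ℤ) * 2^(j % M))
      = (2:ℤ)^(k-1) * (2^M - 2) := by
    rw [← Finset.sum_fiberwise_of_maps_to
      (g := fun j => j % M) (t := Finset.range M)
      (fun j _ => Finset.mem_range.mpr (Nat.mod_lt _ hMpos))]
    have inner : ∀ u ∈ Finset.range M,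
        (∑ j ∈ (Finset.range W).filter (fun j => j % M = u), ((b j).val:ℤ) * 2^(j % M))
          = (if u = 0 then 0 else (2:ℤ)^(k-1)) * 2^u := by
      intro u hu
      have hu' : u < M := Finset.mem_range.mp hu
      have e1 : ∀ j ∈ (Finset.range W).filter (fun j => j % M = u),
          ((b j).val:ℤ) * 2^(j % M) = ((b j).val:ℤ) * 2^u := by
        intro j hj
        simp only [Finset.mem_filter] at hj
        rw [hj.2]
      rw [Finset.sum_congr rfl e1, ← Finset.sum_mul, hcntb u hu']
    rw [Finset.sum_congr rfl inner, hM, Finset.sum_range_succ' _ (2^k)]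
    simp only [if_pos rfl, zero_mul, add_zero]
    have e2 : ∀ i ∈ Finset.range (2^k),
        (if i+1 = 0 then (0:ℤ) else (2:ℤ)^(k-1)) * 2^(i+1) = (2:ℤ)^(k-1) * (2^i * 2) := by
      intro i _
      rw [if_neg (Nat.succ_ne_zero i), pow_succ]
    rw [Finset.sum_congr rfl e2, ← Finset.mul_sum]
    have e3 : (∑ i ∈ Finset.range (2^k), (2:ℤ)^i * 2) = 2^(2^k+1) - 2 := by
      rw [← Finset.sum_mul, geom2, pow_succ]
      ring
    rw [e3]
    simp
  have hBv' : (∑ j ∈ Finset.range W, ((b j).val:ℤ) * 2^((M - j % M) % M))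
      = (2:ℤ)^(k-1) * (2^M - 2) := by
    rw [← Finset.sum_fiberwise_of_maps_to
      (g := fun j => j % M) (t := Finset.range M)
      (fun j _ => Finset.mem_range.mpr (Nat.mod_lt _ hMpos))]
    have inner : ∀ u ∈ Finset.range M,
        (∑ j ∈ (Finset.range W).filter (fun j => j % M = u),
            ((b j).val:ℤ) * 2^((M - j % M) % M))
          = (if u = 0 then 0 else (2:ℤ)^(k-1)) * 2^((M-u) % M) := by
      intro u hu
      have hu' : u < M := Finset.mem_range.mp hu
      have e1 : ∀ j ∈ (Finset.range W).filter (fun j => j % M = u),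
          ((b j).val:ℤ) * 2^((M - j % M) % M) = ((b j).val:ℤ) * 2^((M-u) % M) := by
        intro j hj
        simp only [Finset.mem_filter] at hj
        rw [hj.2]
      rw [Finset.sum_congr rfl e1, ← Finset.sum_mul, hcntb u hu']
    rw [Finset.sum_congr rfl inner, hM, Finset.sum_range_succ' _ (2^k)]
    simp only [if_pos rfl, zero_mul, add_zero]
    have e2 : ∀ i ∈ Finset.range (2^k),
        (if i+1 = 0 then (0:ℤ) else (2:ℤ)^(k-1)) * 2^((2^k+1-(i+1)) % (2^k+1))
          = (2:ℤ)^(k-1) * ((fun i => (2:ℤ)^(i+1)) (2^k - 1 - i)) := by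
      intro i hi
      simp only [Finset.mem_range] at hi
      rw [if_neg (Nat.succ_ne_zero i)]
      have e1 : (2^k+1 - (i+1)) % (2^k+1) = 2^k - i := by
        rw [Nat.mod_eq_of_lt (by omega)]
        omega
      have e2' : 2^k - 1 - i + 1 = 2^k - i := by omega
      rw [e1]
      simp only []
      rw [e2']
    rw [Finset.sum_congr rfl e2, ← Finset.mul_sum,
      Finset.sum_range_reflect (fun i => (2:ℤ)^(i+1)) (2^k)]
    have e3 : (∑ i ∈ Finset.range (2^k), (2:ℤ)^(i+1)) = 2^(2^k+1) - 2 := by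
      have hstep : ∀ i, (2:ℤ)^(i+1) = 2^i * 2 := fun i => by rw [pow_succ]
      rw [Finset.sum_congr rfl (fun i _ => hstep i), ← Finset.sum_mul, geom2, pow_succ]
      ring
    rw [e3]
    simp
  have hG : (∑ j ∈ Finset.range W, (2:ℤ)^(j % M)) = (w:ℤ) * (2^M - 1) := by
    rw [← Finset.sum_fiberwise_of_maps_to
      (g := fun j => j % M) (t := Finset.range M)
      (fun j _ => Finset.mem_range.mpr (Nat.mod_lt _ hMpos))]
    have inner : ∀ u ∈ Finset.range M,
        (∑ j ∈ (Finset.range W).filter (fun j => j % M = u), (2:ℤ)^(j % M))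
          = (w:ℤ) * 2^u := by
      intro u hu
      have hu' : u < M := Finset.mem_range.mp hu
      have e1 : ∀ j ∈ (Finset.range W).filter (fun j => j % M = u),
          (2:ℤ)^(j % M) = (2:ℤ)^u := by
        intro j hj
        simp only [Finset.mem_filter] at hj
        rw [hj.2]
      rw [Finset.sum_congr rfl e1, Finset.sum_const, hfibcard u hu', nsmul_eq_mul]
    rw [Finset.sum_congr rfl inner, ← Finset.mul_sum, hsum1]
  have hG' : (∑ j ∈ Finset.range W, (2:ℤ)^((M - j % M) % M)) = (w:ℤ) * (2^M - 1) := by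
    rw [← Finset.sum_fiberwise_of_maps_to
      (g := fun j => j % M) (t := Finset.range M)
      (fun j _ => Finset.mem_range.mpr (Nat.mod_lt _ hMpos))]
    have inner : ∀ u ∈ Finset.range M,
        (∑ j ∈ (Finset.range W).filter (fun j => j % M = u), (2:ℤ)^((M - j % M) % M))
          = (w:ℤ) * 2^((M-u) % M) := by
      intro u hu
      have hu' : u < M := Finset.mem_range.mp hu
      have e1 : ∀ j ∈ (Finset.range W).filter (fun j => j % M = u),
          (2:ℤ)^((M - j % M) % M) = (2:ℤ)^((M-u) % M) := by
        intro j hj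
        simp only [Finset.mem_filter] at hj
        rw [hj.2]
      rw [Finset.sum_congr rfl e1, Finset.sum_const, hfibcard u hu', nsmul_eq_mul]
    rw [Finset.sum_congr rfl inner, ← Finset.mul_sum, hsum2]
  -- S2 modular reduction
  have hS2b : S2 ≡ 3 * ((w:ℤ) * (2^M-1)) - 2 * ((2:ℤ)^(k-1) * (2^M-2)) [ZMOD m] := by
    have hS2a : S2 = ∑ i ∈ Finset.range 4, ∑ j ∈ Finset.range W,
        ((s (i*W+j)).val : ℤ) * 2^(i*W+j) := by
      rw [hS2, hN]
      exact reindex W hWpos _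
    have step1 : (∑ i ∈ Finset.range 4, ∑ j ∈ Finset.range W,
        ((s (i*W+j)).val : ℤ) * 2^(i*W+j))
        ≡ ∑ i ∈ Finset.range 4, ∑ j ∈ Finset.range W,
          ((s (i*W+j)).val : ℤ) * 2^(j % M) [ZMOD m] := by
      apply sum_modEq
      intro i _
      apply sum_modEq
      intro j _
      exact Int.ModEq.mul_left _ (hpow2 _ _ (exp_congr_S M W i j hMW))
    have step2 : (∑ i ∈ Finset.range 4, ∑ j ∈ Finset.range W,
        ((s (i*W+j)).val : ℤ) * 2^(j % M))
        = 3 * ((w:ℤ) * (2^M-1)) - 2 * ((2:ℤ)^(k-1) * (2^M-2)) := by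
      rw [Finset.sum_comm]
      have e1 : ∀ j ∈ Finset.range W,
          (∑ i ∈ Finset.range 4, ((s (i*W+j)).val : ℤ) * 2^(j % M))
            = (3 - 2 * ((b j).val : ℤ)) * 2^(j % M) := by
        intro j hj
        rw [← Finset.sum_mul, hcolv j (Finset.mem_range.mp hj)]
      rw [Finset.sum_congr rfl e1]
      have e2 : ∀ j ∈ Finset.range W,
          (3 - 2 * ((b j).val : ℤ)) * 2^(j % M)
            = 3 * (2:ℤ)^(j % M) - 2 * (((b j).val : ℤ) * 2^(j % M)) := by
        intro j _
        ring
      rw [Finset.sum_congr rfl e2, Finset.sum_sub_distrib, ← Finset.mul_sum,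
        ← Finset.mul_sum, hG, hBv]
    rw [hS2a]
    exact step1.trans (step2 ▸ Int.ModEq.refl _)
  -- T2 modular reduction
  have hT2b : T2 ≡ 4 * ((2:ℤ)^(k-1) * (2^M-2)) - 2 * ((w:ℤ) * (2^M-1)) [ZMOD m] := by
    have hT2a : T2 = ∑ i ∈ Finset.range 4, ∑ j ∈ Finset.range W,
        (-1:ℤ) ^ (s (i*W+j)).val * 2^((4*W - (i*W+j)) % (4*W)) := by
      rw [hT2, hN]
      exact reindex W hWpos _
    have step1 : (∑ i ∈ Finset.range 4, ∑ j ∈ Finset.range W,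
        (-1:ℤ) ^ (s (i*W+j)).val * 2^((4*W - (i*W+j)) % (4*W)))
        ≡ ∑ i ∈ Finset.range 4, ∑ j ∈ Finset.range W,
          (-1:ℤ) ^ (s (i*W+j)).val * 2^((M - j % M) % M) [ZMOD m] := by
      apply sum_modEq
      intro i hi
      apply sum_modEq
      intro j hj
      refine Int.ModEq.mul_left _ (hpow2 _ _ ?_)
      exact exp_congr M W (4*W) i j hMpos hMW rfl
        (Finset.mem_range.mp hi) (Finset.mem_range.mp hj)
    have step2 : (∑ i ∈ Finset.range 4, ∑ j ∈ Finset.range W,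
        (-1:ℤ) ^ (s (i*W+j)).val * 2^((M - j % M) % M))
        = 4 * ((2:ℤ)^(k-1) * (2^M-2)) - 2 * ((w:ℤ) * (2^M-1)) := by
      rw [Finset.sum_comm]
      have e1 : ∀ j ∈ Finset.range W,
          (∑ i ∈ Finset.range 4, (-1:ℤ) ^ (s (i*W+j)).val * 2^((M - j % M) % M))
            = (4 * ((b j).val : ℤ) - 2) * 2^((M - j % M) % M) := by
        intro j hj
        rw [← Finset.sum_mul, hcols j (Finset.mem_range.mp hj)]
      rw [Finset.sum_congr rfl e1]
      have e2 : ∀ j ∈ Finset.range W,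
          (4 * ((b j).val : ℤ) - 2) * 2^((M - j % M) % M)
            = 4 * (((b j).val : ℤ) * 2^((M - j % M) % M)) - 2 * (2:ℤ)^((M - j % M) % M) := by
        intro j _
        ring
      rw [Finset.sum_congr rfl e2, Finset.sum_sub_distrib, ← Finset.mul_sum,
        ← Finset.mul_sum, hG', hBv']
    rw [hT2a]
    exact step1.trans (step2 ▸ Int.ModEq.refl _)
  -- final computation
  have hm0 : ((2:ℤ)^M - 1) ≡ 0 [ZMOD m] := by
    rw [hm]
    exact (Int.modEq_zero_iff_dvd).mpr dvd_rfl
  have hm1 : ((2:ℤ)^M - 2) ≡ -1 [ZMOD m] := by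
    rw [hm]
    apply Int.modEq_iff_dvd.mpr
    exact ⟨-1, by ring⟩
  have hX : S2 ≡ 2 * (2:ℤ)^(k-1) [ZMOD m] := by
    refine hS2b.trans ?_
    have h1 : 3 * ((w:ℤ) * (2^M-1)) - 2 * ((2:ℤ)^(k-1) * (2^M-2))
        ≡ 3 * ((w:ℤ) * 0) - 2 * ((2:ℤ)^(k-1) * (-1)) [ZMOD m] :=
      Int.ModEq.sub ((hm0.mul_left _).mul_left 3) ((hm1.mul_left _).mul_left 2)
    refine h1.trans ?_
    have : 3 * ((w:ℤ) * 0) - 2 * ((2:ℤ)^(k-1) * (-1)) = 2 * (2:ℤ)^(k-1) := by ring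
    rw [this]
  have hY : T2 ≡ -(4 * (2:ℤ)^(k-1)) [ZMOD m] := by
    refine hT2b.trans ?_
    have h1 : 4 * ((2:ℤ)^(k-1) * (2^M-2)) - 2 * ((w:ℤ) * (2^M-1))
        ≡ 4 * ((2:ℤ)^(k-1) * (-1)) - 2 * ((w:ℤ) * 0) [ZMOD m] :=
      Int.ModEq.sub ((hm1.mul_left _).mul_left 4) ((hm0.mul_left _).mul_left 2)
    refine h1.trans ?_
    have : 4 * ((2:ℤ)^(k-1) * (-1)) - 2 * ((w:ℤ) * 0) = -(4 * (2:ℤ)^(k-1)) := by ring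
    rw [this]
  have hfinal : (2 * (2:ℤ)^(k-1)) * (-(4 * (2:ℤ)^(k-1))) = -(2^(2*k+1)) := by
    have hkk : (2:ℤ)^(k-1) * 2^(k-1) = 2^(2*k-2) := by
      rw [← pow_add]
      congr 1
      omega
    have h8 : (8:ℤ) = 2^3 := by norm_num
    calc (2 * (2:ℤ)^(k-1)) * (-(4 * (2:ℤ)^(k-1)))
        = -(8 * ((2:ℤ)^(k-1) * 2^(k-1))) := by ring
      _ = -(2^3 * (2:ℤ)^(2*k-2)) := by rw [hkk, h8]
      _ = -(2^(3 + (2*k-2))) := by rw [← pow_add]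
      _ = -(2^(2*k+1)) := by
          congr 2
          omega
  calc S2 * T2 ≡ (2 * (2:ℤ)^(k-1)) * (-(4 * (2:ℤ)^(k-1))) [ZMOD m] := hX.mul hY
    _ = -(2^(2*k+1)) := hfinal
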